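/- Let α > 0, p ≥ 1, q ≥ 1 with 1/p + 1/q ≤ 1 + α (and p ≠ 1, q ≠ 1 in the case 1/p + 1/q = 1 + α). If f ∈ L_p(a,b) and g ∈ L_q(a,b), then ∫_a^b f(x)·(^{RL}_{a,1}I^α g)(x) dx = ∫_a^b g(x)·(^{RL}I^α_{b,1} f)(x) dx. -/

import Mathlib

open MeasureTheory Set intervalIntegral

/-- Mittag-Leffler function of parameter `β`: `E_β(z) = Σ_{j≥0} z^j / Γ(βj+1)`. -/
noncomputable def mlE (β z : ℝ) : ℝ := ∑' j : ℕ, z ^ j / Real.Gamma (β * j + 1)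

/-- Left weighted Riemann–Liouville fractional integral of order `γ`:
`(1/Γ(γ)) (1/w(x)) ∫_a^x (x−s)^{γ−1} w(s) f(s) ds`. -/
noncomputable def rlIL (a : ℝ) (w : ℝ → ℝ) (γ : ℝ) (f : ℝ → ℝ) (x : ℝ) : ℝ :=
  (1 / Real.Gamma γ) * (1 / w x) * ∫ s in a..x, (x - s) ^ (γ - 1) * w s * f s

/-- Right weighted Riemann–Liouville fractional integral of order `γ`:
`(1/Γ(γ)) (1/w(x)) ∫_x^b (s−x)^{γ−1} w(s) f(s) ds`. -/
noncomputable def rlIR (b : ℝ) (w : ℝ → ℝ) (γ : ℝ) (f : ℝ → ℝ) (x : ℝ) : ℝ :=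
  (1 / Real.Gamma γ) * (1 / w x) * ∫ s in x..b, (s - x) ^ (γ - 1) * w s * f s

/-- Left weighted generalized fractional integral
`(_{a,w}I^{α,β} f)(x) = φ(α) f(x) + ψ(α) (^{RL}_{a,w}I^β f)(x)`,
with `φ(α) = (1−α)/B(α)` and `ψ(α) = α/B(α)`. -/
noncomputable def genIL (a : ℝ) (w B : ℝ → ℝ) (α β : ℝ) (f : ℝ → ℝ) (x : ℝ) : ℝ :=
  ((1 - α) / B α) * f x + (α / B α) * rlIL a w β f x

/-- Right weighted generalized fractional integral
`(I^{α,β}_{b,w} f)(x) = φ(α) f(x) + ψ(α) (^{RL}I^β_{b,w} f)(x)`. -/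
noncomputable def genIR (b : ℝ) (w B : ℝ → ℝ) (α β : ℝ) (f : ℝ → ℝ) (x : ℝ) : ℝ :=
  ((1 - α) / B α) * f x + (α / B α) * rlIR b w β f x

/-- Left weighted generalized fractional derivative in the Riemann–Liouville sense:
`(1/φ(α)) (1/w(x)) d/dx ∫_a^x w(s) f(s) E_β(−μ_α (x−s)^β) ds`, `μ_α = α/(1−α)`. -/
noncomputable def genDL (a : ℝ) (w B : ℝ → ℝ) (α β : ℝ) (f : ℝ → ℝ) (x : ℝ) : ℝ :=
  (1 / ((1 - α) / B α)) * (1 / w x) *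
    deriv (fun y => ∫ s in a..y, w s * f s * mlE β (-(α / (1 - α)) * (y - s) ^ β)) x

/-- Right weighted generalized fractional derivative in the Riemann–Liouville sense:
`(−1/φ(α)) (1/w(x)) d/dx ∫_x^b w(s) f(s) E_β(−μ_α (s−x)^β) ds`. -/
noncomputable def genDR (b : ℝ) (w B : ℝ → ℝ) (α β : ℝ) (f : ℝ → ℝ) (x : ℝ) : ℝ :=
  (-1 / ((1 - α) / B α)) * (1 / w x) *
    deriv (fun y => ∫ s in y..b, w s * f s * mlE β (-(α / (1 - α)) * (s - y) ^ β)) x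

/-- `f` is absolutely continuous on `[a,b]`: it is an indefinite integral of an
integrable function. -/
def AbsCont (a b : ℝ) (f : ℝ → ℝ) : Prop :=
  ∃ f' : ℝ → ℝ, IntegrableOn f' (Icc a b) ∧ ∀ x ∈ Icc a b, f x = f a + ∫ t in a..x, f' t

namespace RLIBP

open scoped ENNReal

lemma lint_rpow_Ioo {γ : ℝ} (hγ : -1 < γ) {T : ℝ} (hT : 0 ≤ T) :
    ∫⁻ t in Ioo (0:ℝ) T, ENNReal.ofReal (t ^ γ) ∂volume
      = ENNReal.ofReal (T ^ (γ + 1) / (γ + 1)) := by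
  have hint : IntegrableOn (fun t : ℝ => t ^ γ) (Ioo 0 T) volume := by
    exact (intervalIntegrable_rpow' (a := 0) (b := T) hγ).1.mono_set Ioo_subset_Ioc_self
  rw [← ofReal_integral_eq_lintegral_ofReal hint]
  · congr 1
    have h1 : (volume : Measure ℝ).restrict (Ioo 0 T) = volume.restrict (Ioc 0 T) :=
      Measure.restrict_congr_set Ioo_ae_eq_Ioc
    rw [h1, ← intervalIntegral.integral_of_le hT, integral_rpow (Or.inl hγ)]
    rw [Real.zero_rpow (by linarith)]
    ring
  · filter_upwards [ae_restrict_mem measurableSet_Ioo] with t ht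
    exact Real.rpow_nonneg ht.1.le _

lemma lint_rpow_Ioi {γ : ℝ} (hγ : γ < -1) :
    ∫⁻ t in Ioi (1:ℝ), ENNReal.ofReal (t ^ γ) ∂volume
      = ENNReal.ofReal (-1 / (γ + 1)) := by
  have hint : IntegrableOn (fun t : ℝ => t ^ γ) (Ioi 1) volume :=
    integrableOn_Ioi_rpow_of_lt hγ one_pos
  rw [← ofReal_integral_eq_lintegral_ofReal hint]
  · congr 1
    rw [integral_Ioi_rpow_of_lt hγ one_pos, Real.one_rpow]
  · filter_upwards [ae_restrict_mem measurableSet_Ioi] with t ht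
    exact Real.rpow_nonneg (by linarith [ht.out]) _

/-- comparing a set integral with the integral over a comparison set of the same measure. -/
lemma lint_le_of_compare {k : ℝ → ℝ≥0∞} (hk : Measurable k) {B I : Set ℝ}
    (hB : MeasurableSet B) (hI : MeasurableSet I) {κ0 : ℝ≥0∞}
    (hBI : ∀ t ∈ B \ I, k t ≤ κ0) (hIB : ∀ t ∈ I, κ0 ≤ k t)
    (hvol : volume B = volume I) (hfin : volume I ≠ ⊤) :
    ∫⁻ t in B, k t ∂volume ≤ ∫⁻ t in I, k t ∂volume := by
  have hsplitB := lintegral_inter_add_diff (μ := volume) k B hI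
  have hsplitI := lintegral_inter_add_diff (μ := volume) k I hB
  have hfinBI : volume (B ∩ I) ≠ ⊤ := by
    refine ne_top_of_le_ne_top hfin (le_trans (measure_mono inter_subset_right) le_rfl)
  have hmeq : volume (B \ I) = volume (I \ B) := by
    have h1 : volume (B \ I) = volume B - volume (B ∩ I) := by
      rw [← diff_self_inter]
      exact measure_diff inter_subset_left (hB.inter hI).nullMeasurableSet hfinBI
    have h2 : volume (I \ B) = volume I - volume (I ∩ B) := by
      rw [← diff_self_inter]
      refine measure_diff inter_subset_left (hI.inter hB).nullMeasurableSet ?_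
      exact ne_top_of_le_ne_top hfin (measure_mono inter_subset_left)
    rw [h1, h2, hvol, inter_comm]
  have hstep1 : ∫⁻ t in B \ I, k t ∂volume ≤ κ0 * volume (B \ I) := by
    calc ∫⁻ t in B \ I, k t ∂volume ≤ ∫⁻ _ in B \ I, κ0 ∂volume :=
          setLIntegral_mono measurable_const (fun t ht => hBI t ht)
      _ = κ0 * volume (B \ I) := setLIntegral_const _ _
  have hstep2 : κ0 * volume (I \ B) ≤ ∫⁻ t in I \ B, k t ∂volume := by
    calc κ0 * volume (I \ B) = ∫⁻ _ in I \ B, κ0 ∂volume := (setLIntegral_const _ _).symm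
      _ ≤ ∫⁻ t in I \ B, k t ∂volume :=
          setLIntegral_mono hk (fun t ht => hIB t ht.1)
  calc ∫⁻ t in B, k t ∂volume
      = ∫⁻ t in B ∩ I, k t ∂volume + ∫⁻ t in B \ I, k t ∂volume := hsplitB.symm
    _ ≤ ∫⁻ t in B ∩ I, k t ∂volume + ∫⁻ t in I \ B, k t ∂volume := by
        refine add_le_add le_rfl (le_trans hstep1 (by rw [hmeq]; exact hstep2))
    _ = ∫⁻ t in I ∩ B, k t ∂volume + ∫⁻ t in I \ B, k t ∂volume := by rw [inter_comm]
    _ = ∫⁻ t in I, k t ∂volume := hsplitI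

lemma lint_ker_IooL {α : ℝ} (hα0 : 0 < α) (x r : ℝ) (hr : 0 ≤ r) :
    ∫⁻ s in Ioo (x - r) x, ENNReal.ofReal ((x - s) ^ (α - 1)) ∂volume
      = ENNReal.ofReal (r ^ α / α) := by
  have hint : IntegrableOn (fun s : ℝ => (x - s) ^ (α - 1)) (Ioo (x - r) x) volume := by
    have h1 : IntervalIntegrable (fun t : ℝ => t ^ (α - 1)) volume 0 r :=
      intervalIntegrable_rpow' (by linarith)
    have h2 := (h1.comp_sub_left x)
    have h3 : IntervalIntegrable (fun s : ℝ => (x - s) ^ (α - 1)) volume (x - r) x := by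
      simpa [sub_zero] using h2.symm
    exact h3.1.mono_set Ioo_subset_Ioc_self
  rw [← ofReal_integral_eq_lintegral_ofReal hint]
  · congr 1
    have h1 : (volume : Measure ℝ).restrict (Ioo (x - r) x) = volume.restrict (Ioc (x - r) x) :=
      Measure.restrict_congr_set Ioo_ae_eq_Ioc
    rw [h1, ← intervalIntegral.integral_of_le (by linarith : x - r ≤ x)]
    have h2 := intervalIntegral.integral_comp_sub_left (a := x - r) (b := x)
      (fun t : ℝ => t ^ (α - 1)) x
    rw [h2, sub_self, sub_sub_cancel, integral_rpow (Or.inl (by linarith))]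
    rw [Real.zero_rpow (by linarith), sub_add_cancel, sub_zero]
  · filter_upwards [ae_restrict_mem measurableSet_Ioo] with s hs
    exact Real.rpow_nonneg (by linarith [hs.2]) _

lemma lint_ker_IooR {α : ℝ} (hα0 : 0 < α) (x r : ℝ) (hr : 0 ≤ r) :
    ∫⁻ s in Ioo x (x + r), ENNReal.ofReal ((s - x) ^ (α - 1)) ∂volume
      = ENNReal.ofReal (r ^ α / α) := by
  have hint : IntegrableOn (fun s : ℝ => (s - x) ^ (α - 1)) (Ioo x (x + r)) volume := by
    have h1 : IntervalIntegrable (fun t : ℝ => t ^ (α - 1)) volume 0 r :=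
      intervalIntegrable_rpow' (by linarith)
    have h2 := h1.comp_sub_right x
    have h3 : IntervalIntegrable (fun s : ℝ => (s - x) ^ (α - 1)) volume x (x + r) := by
      simpa [add_comm] using h2
    exact h3.1.mono_set Ioo_subset_Ioc_self
  rw [← ofReal_integral_eq_lintegral_ofReal hint]
  · congr 1
    have h1 : (volume : Measure ℝ).restrict (Ioo x (x + r)) = volume.restrict (Ioc x (x + r)) :=
      Measure.restrict_congr_set Ioo_ae_eq_Ioc
    rw [h1, ← intervalIntegral.integral_of_le (by linarith : x ≤ x + r)]
    have h2 := intervalIntegral.integral_comp_sub_right (a := x) (b := x + r)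
      (fun t : ℝ => t ^ (α - 1)) x
    rw [h2, sub_self, add_sub_cancel_left, integral_rpow (Or.inl (by linarith))]
    rw [Real.zero_rpow (by linarith), sub_add_cancel, sub_zero]
  · filter_upwards [ae_restrict_mem measurableSet_Ioo] with s hs
    exact Real.rpow_nonneg (by linarith [hs.1]) _

lemma lem_ballL {α : ℝ} (hα0 : 0 < α) (hα1 : α < 1) (x : ℝ) {B : Set ℝ}
    (hB : MeasurableSet B) (hBx : B ⊆ Iio x) :
    ∫⁻ s in B, ENNReal.ofReal ((x - s) ^ (α - 1)) ∂volume
      ≤ ENNReal.ofReal α⁻¹ * volume B ^ α := by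
  rcases eq_top_or_lt_top (volume B) with hv | hv
  · rw [hv, ENNReal.top_rpow_of_pos hα0, ENNReal.mul_top]
    · exact le_top
    · simp only [ne_eq, ENNReal.ofReal_eq_zero, not_le]
      exact inv_pos.2 hα0
  rcases eq_or_ne (volume B) 0 with hv0 | hv0
  · rw [Measure.restrict_eq_zero.2 hv0]
    simp
  set r := (volume B).toReal with hrdef
  have hr0 : 0 < r := ENNReal.toReal_pos hv0 hv.ne
  have hvol : volume B = ENNReal.ofReal r := (ENNReal.ofReal_toReal hv.ne).symm
  have hIvol : volume (Ioo (x - r) x) = ENNReal.ofReal r := by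
    rw [Real.volume_Ioo]; congr 1; ring
  have hcomp : ∫⁻ s in B, ENNReal.ofReal ((x - s) ^ (α - 1)) ∂volume
      ≤ ∫⁻ s in Ioo (x - r) x, ENNReal.ofReal ((x - s) ^ (α - 1)) ∂volume := by
    refine lint_le_of_compare (by fun_prop) hB measurableSet_Ioo
      (κ0 := ENNReal.ofReal (r ^ (α - 1))) ?_ ?_ (by rw [hvol, hIvol]) ?_
    · rintro t ⟨htB, htI⟩
      have htx : t < x := hBx htB
      have htr : r ≤ x - t := by
        by_contra hcon
        exact htI ⟨by linarith, htx⟩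
      exact ENNReal.ofReal_le_ofReal
        (Real.rpow_le_rpow_of_nonpos hr0 htr (by linarith))
    · rintro t ⟨ht1, ht2⟩
      exact ENNReal.ofReal_le_ofReal
        (Real.rpow_le_rpow_of_nonpos (by linarith) (by linarith) (by linarith))
    · rw [hIvol]; exact ENNReal.ofReal_ne_top
  refine hcomp.trans ?_
  rw [lint_ker_IooL hα0 x r hr0.le]
  rw [hvol, ENNReal.ofReal_rpow_of_pos hr0, ← ENNReal.ofReal_mul (by positivity)]
  exact le_of_eq (by rw [div_eq_mul_inv, mul_comm])

lemma lem_ballR {α : ℝ} (hα0 : 0 < α) (hα1 : α < 1) (x : ℝ) {B : Set ℝ}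
    (hB : MeasurableSet B) (hBx : B ⊆ Ioi x) :
    ∫⁻ s in B, ENNReal.ofReal ((s - x) ^ (α - 1)) ∂volume
      ≤ ENNReal.ofReal α⁻¹ * volume B ^ α := by
  rcases eq_top_or_lt_top (volume B) with hv | hv
  · rw [hv, ENNReal.top_rpow_of_pos hα0, ENNReal.mul_top]
    · exact le_top
    · simp only [ne_eq, ENNReal.ofReal_eq_zero, not_le]
      exact inv_pos.2 hα0
  rcases eq_or_ne (volume B) 0 with hv0 | hv0
  · rw [Measure.restrict_eq_zero.2 hv0]
    simp
  set r := (volume B).toReal with hrdef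
  have hr0 : 0 < r := ENNReal.toReal_pos hv0 hv.ne
  have hvol : volume B = ENNReal.ofReal r := (ENNReal.ofReal_toReal hv.ne).symm
  have hIvol : volume (Ioo x (x + r)) = ENNReal.ofReal r := by
    rw [Real.volume_Ioo]; congr 1; ring
  have hcomp : ∫⁻ s in B, ENNReal.ofReal ((s - x) ^ (α - 1)) ∂volume
      ≤ ∫⁻ s in Ioo x (x + r), ENNReal.ofReal ((s - x) ^ (α - 1)) ∂volume := by
    refine lint_le_of_compare (by fun_prop) hB measurableSet_Ioo
      (κ0 := ENNReal.ofReal (r ^ (α - 1))) ?_ ?_ (by rw [hvol, hIvol]) ?_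
    · rintro t ⟨htB, htI⟩
      have htx : x < t := hBx htB
      have htr : r ≤ t - x := by
        by_contra hcon
        exact htI ⟨htx, by linarith⟩
      exact ENNReal.ofReal_le_ofReal
        (Real.rpow_le_rpow_of_nonpos hr0 htr (by linarith))
    · rintro t ⟨ht1, ht2⟩
      exact ENNReal.ofReal_le_ofReal
        (Real.rpow_le_rpow_of_nonpos (by linarith) (by linarith) (by linarith))
    · rw [hIvol]; exact ENNReal.ofReal_ne_top
  refine hcomp.trans ?_
  rw [lint_ker_IooR hα0 x r hr0.le]
  rw [hvol, ENNReal.ofReal_rpow_of_pos hr0, ← ENNReal.ofReal_mul (by positivity)]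
  exact le_of_eq (by rw [div_eq_mul_inv, mul_comm])

lemma lem_innerL {α : ℝ} (hα0 : 0 < α) (hα1 : α < 1) {a b : ℝ} (g : ℝ → ℝ)
    (hg : Measurable g) (x w : ℝ) :
    ∫⁻ s in Ioo a b, (if |g s| ≤ w ∧ s < x then
        ENNReal.ofReal |g s| * ENNReal.ofReal ((x - s) ^ (α - 1)) else 0) ∂volume
      ≤ ENNReal.ofReal α⁻¹ *
        ∫⁻ d in Ioo (0:ℝ) w, (volume {s | s ∈ Ioo a b ∧ d < |g s|}) ^ α ∂volume := by
  set K : ℝ → ℝ≥0∞ := fun s => ENNReal.ofReal ((x - s) ^ (α - 1)) with hK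
  set ψ : ℝ → ℝ → ℝ≥0∞ := fun s d => if d < |g s| ∧ s < x then K s else 0 with hψ
  have claim : ∀ s : ℝ, (if |g s| ≤ w ∧ s < x then ENNReal.ofReal |g s| * K s else 0)
      ≤ ∫⁻ d in Ioo (0:ℝ) w, ψ s d ∂volume := by
    intro s
    by_cases hsx : s < x
    · by_cases hgw : |g s| ≤ w
      · have hrw : (fun d => ψ s d) = fun d => (Iio |g s|).indicator (fun _ => K s) d := by
          funext d
          by_cases h : d < |g s| <;> simp [hψ, indicator_apply, h, hsx]
        simp only [hgw, hsx, and_self, if_true]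
        rw [hrw, lintegral_indicator measurableSet_Iio, Measure.restrict_restrict measurableSet_Iio,
          setLIntegral_const]
        have hset : Iio |g s| ∩ Ioo 0 w = Ioo 0 (min |g s| w) := by
          ext d; simp only [mem_inter_iff, mem_Iio, mem_Ioo, lt_min_iff]; tauto
        rw [hset, Real.volume_Ioo, sub_zero, min_eq_left hgw, mul_comm]
      · simp [hgw]
    · simp [hsx]
  calc ∫⁻ s in Ioo a b, (if |g s| ≤ w ∧ s < x then ENNReal.ofReal |g s| * K s else 0) ∂volume
      ≤ ∫⁻ s in Ioo a b, ∫⁻ d in Ioo (0:ℝ) w, ψ s d ∂volume ∂volume :=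
        lintegral_mono claim
    _ = ∫⁻ d in Ioo (0:ℝ) w, ∫⁻ s in Ioo a b, ψ s d ∂volume ∂volume := by
        refine lintegral_lintegral_swap ?_
        refine (Measurable.ite ?_ (by fun_prop) measurable_const).aemeasurable
        exact (measurableSet_lt measurable_snd (by fun_prop)).inter
          (measurableSet_lt measurable_fst measurable_const)
    _ ≤ ∫⁻ d in Ioo (0:ℝ) w,
          ENNReal.ofReal α⁻¹ * (volume {s | s ∈ Ioo a b ∧ d < |g s|}) ^ α ∂volume := by
        refine lintegral_mono fun d => ?_
        have hS : MeasurableSet {s : ℝ | d < |g s| ∧ s < x} :=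
          (measurableSet_lt measurable_const hg.abs).inter (measurableSet_Iio)
        have hrw : (fun s => ψ s d) = fun s => ({s : ℝ | d < |g s| ∧ s < x}).indicator K s := by
          funext s
          by_cases h : d < |g s| ∧ s < x <;> simp [hψ, indicator_apply, h]
        rw [hrw, lintegral_indicator hS, Measure.restrict_restrict hS]
        refine le_trans (lem_ballL hα0 hα1 x (hS.inter measurableSet_Ioo) ?_) ?_
        · exact fun s hs => hs.1.2
        · refine mul_le_mul_right (ENNReal.rpow_le_rpow (measure_mono ?_) hα0.le) _
          rintro s ⟨⟨h1, _⟩, h2⟩; exact ⟨h2, h1⟩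
    _ = ENNReal.ofReal α⁻¹ *
          ∫⁻ d in Ioo (0:ℝ) w, (volume {s | s ∈ Ioo a b ∧ d < |g s|}) ^ α ∂volume :=
        lintegral_const_mul' _ _ ENNReal.ofReal_ne_top

lemma lem_innerR {α : ℝ} (hα0 : 0 < α) (hα1 : α < 1) {a b : ℝ} (f : ℝ → ℝ)
    (hf : Measurable f) (s w : ℝ) :
    ∫⁻ x in Ioo a b, (if |f x| ≤ w ∧ s < x then
        ENNReal.ofReal |f x| * ENNReal.ofReal ((x - s) ^ (α - 1)) else 0) ∂volume
      ≤ ENNReal.ofReal α⁻¹ *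
        ∫⁻ c in Ioo (0:ℝ) w, (volume {x | x ∈ Ioo a b ∧ c < |f x|}) ^ α ∂volume := by
  set K : ℝ → ℝ≥0∞ := fun x => ENNReal.ofReal ((x - s) ^ (α - 1)) with hK
  set ψ : ℝ → ℝ → ℝ≥0∞ := fun x c => if c < |f x| ∧ s < x then K x else 0 with hψ
  have claim : ∀ x : ℝ, (if |f x| ≤ w ∧ s < x then ENNReal.ofReal |f x| * K x else 0)
      ≤ ∫⁻ c in Ioo (0:ℝ) w, ψ x c ∂volume := by
    intro x
    by_cases hsx : s < x
    · by_cases hgw : |f x| ≤ w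
      · have hrw : (fun c => ψ x c) = fun c => (Iio |f x|).indicator (fun _ => K x) c := by
          funext c
          by_cases h : c < |f x| <;> simp [hψ, indicator_apply, h, hsx]
        simp only [hgw, hsx, and_self, if_true]
        rw [hrw, lintegral_indicator measurableSet_Iio, Measure.restrict_restrict measurableSet_Iio,
          setLIntegral_const]
        have hset : Iio |f x| ∩ Ioo 0 w = Ioo 0 (min |f x| w) := by
          ext c; simp only [mem_inter_iff, mem_Iio, mem_Ioo, lt_min_iff]; tauto
        rw [hset, Real.volume_Ioo, sub_zero, min_eq_left hgw, mul_comm]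
      · simp [hgw]
    · simp [hsx]
  calc ∫⁻ x in Ioo a b, (if |f x| ≤ w ∧ s < x then ENNReal.ofReal |f x| * K x else 0) ∂volume
      ≤ ∫⁻ x in Ioo a b, ∫⁻ c in Ioo (0:ℝ) w, ψ x c ∂volume ∂volume :=
        lintegral_mono claim
    _ = ∫⁻ c in Ioo (0:ℝ) w, ∫⁻ x in Ioo a b, ψ x c ∂volume ∂volume := by
        refine lintegral_lintegral_swap ?_
        refine (Measurable.ite ?_ (by fun_prop) measurable_const).aemeasurable
        exact (measurableSet_lt measurable_snd (by fun_prop)).inter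
          (measurableSet_lt measurable_const measurable_fst)
    _ ≤ ∫⁻ c in Ioo (0:ℝ) w,
          ENNReal.ofReal α⁻¹ * (volume {x | x ∈ Ioo a b ∧ c < |f x|}) ^ α ∂volume := by
        refine lintegral_mono fun c => ?_
        have hS : MeasurableSet {x : ℝ | c < |f x| ∧ s < x} :=
          (measurableSet_lt measurable_const hf.abs).inter (measurableSet_Ioi)
        have hrw : (fun x => ψ x c) = fun x => ({x : ℝ | c < |f x| ∧ s < x}).indicator K x := by
          funext x
          by_cases h : c < |f x| ∧ s < x <;> simp [hψ, indicator_apply, h]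
        rw [hrw, lintegral_indicator hS, Measure.restrict_restrict hS]
        refine le_trans (lem_ballR hα0 hα1 s (hS.inter measurableSet_Ioo) ?_) ?_
        · exact fun x hx => hx.1.2
        · refine mul_le_mul_right (ENNReal.rpow_le_rpow (measure_mono ?_) hα0.le) _
          rintro x ⟨⟨h1, _⟩, h2⟩; exact ⟨h2, h1⟩
    _ = ENNReal.ofReal α⁻¹ *
          ∫⁻ c in Ioo (0:ℝ) w, (volume {x | x ∈ Ioo a b ∧ c < |f x|}) ^ α ∂volume :=
        lintegral_const_mul' _ _ ENNReal.ofReal_ne_top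

lemma lem_cheb {q : ℝ} (hq : 0 < q) {a b : ℝ} (g : ℝ → ℝ) (hg : Measurable g)
    {d : ℝ} (hd : 0 < d) :
    volume {s | s ∈ Ioo a b ∧ d < |g s|}
      ≤ ENNReal.ofReal (d ^ (-q)) * ∫⁻ s in Ioo a b, ENNReal.ofReal (|g s| ^ q) ∂volume := by
  have hset : {s | s ∈ Ioo a b ∧ d < |g s|} = {s | d < |g s|} ∩ Ioo a b := by
    ext s; simp only [mem_setOf_eq, mem_inter_iff]; tauto
  rw [hset, ← Measure.restrict_apply (measurableSet_lt measurable_const hg.abs)]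
  set μ' := volume.restrict (Ioo a b)
  have hsub : {s | d < |g s|} ⊆ {s | ENNReal.ofReal (d ^ q) ≤ ENNReal.ofReal (|g s| ^ q)} := by
    intro s hs
    exact ENNReal.ofReal_le_ofReal (Real.rpow_le_rpow hd.le (le_of_lt hs) hq.le)
  have hdq : (0:ℝ) < d ^ q := Real.rpow_pos_of_pos hd q
  calc μ' {s | d < |g s|} ≤ μ' {s | ENNReal.ofReal (d ^ q) ≤ ENNReal.ofReal (|g s| ^ q)} :=
        measure_mono hsub
    _ ≤ (∫⁻ s, ENNReal.ofReal (|g s| ^ q) ∂μ') / ENNReal.ofReal (d ^ q) :=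
        meas_ge_le_lintegral_div (by fun_prop) (by simp [hdq]) ENNReal.ofReal_ne_top
    _ = ENNReal.ofReal (d ^ (-q)) * ∫⁻ s, ENNReal.ofReal (|g s| ^ q) ∂μ' := by
        rw [ENNReal.div_eq_inv_mul, ← ENNReal.ofReal_inv_of_pos hdq]
        congr 2
        rw [← Real.rpow_neg hd.le]

lemma lem_phi_lt {q α α' : ℝ} (hα'0 : 0 < α') (hα'α : α' ≤ α) (hq : 0 < q)
    (hqα' : q * α' < 1) {a b : ℝ} (g : ℝ → ℝ) (hg : Measurable g) {T : ℝ} (hT : 0 ≤ T) :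
    ∫⁻ d in Ioo (0:ℝ) T, (volume {s | s ∈ Ioo a b ∧ d < |g s|}) ^ α ∂volume
      ≤ ENNReal.ofReal (b - a) ^ (α - α') *
          (∫⁻ s in Ioo a b, ENNReal.ofReal (|g s| ^ q) ∂volume) ^ α' *
          ENNReal.ofReal (T ^ (1 - q * α') / (1 - q * α')) := by
  have hα0 : 0 < α := lt_of_lt_of_le hα'0 hα'α
  set Λ := ENNReal.ofReal (b - a) with hΛ
  set Y := ∫⁻ s in Ioo a b, ENNReal.ofReal (|g s| ^ q) ∂volume with hY
  have hpt : ∀ d ∈ Ioo (0:ℝ) T, (volume {s | s ∈ Ioo a b ∧ d < |g s|}) ^ α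
      ≤ Λ ^ (α - α') * Y ^ α' * ENNReal.ofReal (d ^ (-(q * α'))) := by
    intro d hd
    set v := volume {s | s ∈ Ioo a b ∧ d < |g s|} with hv
    have hvΛ : v ≤ Λ := by
      rw [hΛ, ← Real.volume_Ioo (a := a) (b := b)]
      exact measure_mono fun s hs => hs.1
    rcases eq_or_ne v 0 with h0 | h0
    · rw [h0, ENNReal.zero_rpow_of_pos hα0]; exact zero_le
    have hvtop : v ≠ ⊤ := (lt_of_le_of_lt hvΛ ENNReal.ofReal_lt_top).ne
    have hsplit : v ^ α = v ^ (α - α') * v ^ α' := by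
      rw [← ENNReal.rpow_add _ _ h0 hvtop]; ring_nf
    rw [hsplit]
    have h1 : v ^ (α - α') ≤ Λ ^ (α - α') := ENNReal.rpow_le_rpow hvΛ (by linarith)
    have h2 : v ^ α' ≤ ENNReal.ofReal (d ^ (-(q * α'))) * Y ^ α' := by
      calc v ^ α' ≤ (ENNReal.ofReal (d ^ (-q)) * Y) ^ α' :=
            ENNReal.rpow_le_rpow (lem_cheb hq g hg hd.1) hα'0.le
        _ = ENNReal.ofReal (d ^ (-q)) ^ α' * Y ^ α' :=
            ENNReal.mul_rpow_of_nonneg _ _ hα'0.le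
        _ = ENNReal.ofReal (d ^ (-(q * α'))) * Y ^ α' := by
            rw [ENNReal.ofReal_rpow_of_pos (Real.rpow_pos_of_pos hd.1 _),
              ← Real.rpow_mul hd.1.le]
            ring_nf
    calc v ^ (α - α') * v ^ α'
        ≤ Λ ^ (α - α') * (ENNReal.ofReal (d ^ (-(q * α'))) * Y ^ α') := mul_le_mul' h1 h2
      _ = Λ ^ (α - α') * Y ^ α' * ENNReal.ofReal (d ^ (-(q * α'))) := by ring
  calc ∫⁻ d in Ioo (0:ℝ) T, (volume {s | s ∈ Ioo a b ∧ d < |g s|}) ^ α ∂volume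
      ≤ ∫⁻ d in Ioo (0:ℝ) T, Λ ^ (α - α') * Y ^ α' * ENNReal.ofReal (d ^ (-(q * α'))) ∂volume :=
        setLIntegral_mono (by fun_prop) hpt
    _ = Λ ^ (α - α') * Y ^ α' * ∫⁻ d in Ioo (0:ℝ) T, ENNReal.ofReal (d ^ (-(q * α'))) ∂volume :=
        lintegral_const_mul _ (by fun_prop)
    _ = Λ ^ (α - α') * Y ^ α' * ENNReal.ofReal (T ^ (1 - q * α') / (1 - q * α')) := by
        rw [lint_rpow_Ioo (by linarith) hT]
        congr 2 <;> ring
    _ = _ := rfl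

lemma lem_phi_top {q α : ℝ} (hα0 : 0 < α) (hq : 0 < q) (hqα : 1 < q * α)
    {a b : ℝ} (g : ℝ → ℝ) (hg : Measurable g) :
    ∫⁻ d in Ioi (0:ℝ), (volume {s | s ∈ Ioo a b ∧ d < |g s|}) ^ α ∂volume
      ≤ ENNReal.ofReal (b - a) ^ α +
        (∫⁻ s in Ioo a b, ENNReal.ofReal (|g s| ^ q) ∂volume) ^ α *
          ENNReal.ofReal (-1 / (-(q * α) + 1)) := by
  set Λ := ENNReal.ofReal (b - a) with hΛ
  set Y := ∫⁻ s in Ioo a b, ENNReal.ofReal (|g s| ^ q) ∂volume with hY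
  rw [← Ioo_union_Ici_eq_Ioi (zero_lt_one),
    lintegral_union measurableSet_Ici
      (Set.disjoint_left.mpr fun d hd hd' => absurd hd'.out (not_le.2 hd.2))]
  refine add_le_add ?_ ?_
  · calc ∫⁻ d in Ioo (0:ℝ) 1, (volume {s | s ∈ Ioo a b ∧ d < |g s|}) ^ α ∂volume
        ≤ ∫⁻ _ in Ioo (0:ℝ) 1, Λ ^ α ∂volume := by
          refine setLIntegral_mono measurable_const fun d _ => ?_
          refine ENNReal.rpow_le_rpow ?_ hα0.le
          rw [hΛ, ← Real.volume_Ioo (a := a) (b := b)]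
          exact measure_mono fun s hs => hs.1
      _ = Λ ^ α := by
          rw [setLIntegral_const, Real.volume_Ioo]
          simp
  · calc ∫⁻ d in Ici (1:ℝ), (volume {s | s ∈ Ioo a b ∧ d < |g s|}) ^ α ∂volume
        ≤ ∫⁻ d in Ici (1:ℝ), Y ^ α * ENNReal.ofReal (d ^ (-(q * α))) ∂volume := by
          refine setLIntegral_mono (by fun_prop) fun d hd => ?_
          have hd0 : (0:ℝ) < d := lt_of_lt_of_le zero_lt_one hd
          calc (volume {s | s ∈ Ioo a b ∧ d < |g s|}) ^ α
              ≤ (ENNReal.ofReal (d ^ (-q)) * Y) ^ α :=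
                ENNReal.rpow_le_rpow (lem_cheb hq g hg hd0) hα0.le
            _ = ENNReal.ofReal (d ^ (-q)) ^ α * Y ^ α :=
                ENNReal.mul_rpow_of_nonneg _ _ hα0.le
            _ = Y ^ α * ENNReal.ofReal (d ^ (-(q * α))) := by
                rw [ENNReal.ofReal_rpow_of_pos (Real.rpow_pos_of_pos hd0 _),
                  ← Real.rpow_mul hd0.le]
                ring_nf
      _ = Y ^ α * ∫⁻ d in Ici (1:ℝ), ENNReal.ofReal (d ^ (-(q * α))) ∂volume :=
          lintegral_const_mul _ (by fun_prop)
      _ = Y ^ α * ENNReal.ofReal (-1 / (-(q * α) + 1)) := by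
          rw [Measure.restrict_congr_set (Ioi_ae_eq_Ici (a := (1:ℝ))).symm,
            lint_rpow_Ioi (by linarith)]

lemma lem_exps {p q α : ℝ} (hp : 1 < p) (hq : 1 ≤ q) (hα0 : 0 < α)
    (hpq : 1 / p + 1 / q ≤ 1 + α) :
    ∃ α', 0 < α' ∧ α' ≤ α ∧ q * α' < 1 ∧ 1 / p + 1 / q ≤ 1 + α' := by
  have hp0 : (0:ℝ) < p := by linarith
  have hq0 : (0:ℝ) < q := by linarith
  have h1p : 1 / p < 1 := by rw [div_lt_one hp0]; exact hp
  have h1q : 0 < 1 / q := by positivity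
  have h1q' : 1 / q ≤ 1 := by rw [div_le_one hq0]; exact hq
  set l := max 0 (1 / p + 1 / q - 1) with hl
  set m := (l + 1 / q) / 2 with hm
  have hl0 : 0 ≤ l := le_max_left _ _
  have hlq : l < 1 / q := by
    rw [hl, max_lt_iff]
    constructor
    · exact h1q
    · linarith
  have hl1 : 1 / p + 1 / q - 1 ≤ l := le_max_right _ _
  have hm0 : 0 < m := by rw [hm]; linarith
  have hmq : m < 1 / q := by rw [hm]; linarith
  have hml : l ≤ m := by rw [hm]; linarith [hlq.le]
  refine ⟨min α m, lt_min hα0 hm0, min_le_left _ _, ?_, ?_⟩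
  · have : min α m ≤ m := min_le_right _ _
    calc q * min α m ≤ q * m := by nlinarith
      _ < q * (1 / q) := by nlinarith
      _ = 1 := by field_simp
  · have h2 : 1 / p + 1 / q - 1 ≤ min α m := le_min (by linarith) (by linarith)
    linarith

lemma lem_rpow_le_one_add {z : ℝ≥0∞} {s p : ℝ} (hs : 0 ≤ s) (hsp : s ≤ p) :
    z ^ s ≤ 1 + z ^ p := by
  rcases le_total z 1 with hz | hz
  · exact le_trans (ENNReal.rpow_le_one hz hs) le_self_add
  · exact le_trans (ENNReal.rpow_le_rpow_of_exponent_le hz hsp) le_add_self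

/-- `∫⁻ ofReal |f| ≤ Λ + X` where `X = ∫⁻ ofReal (|f|^p)`, `p ≥ 1`. -/
lemma lem_l1_bound {p : ℝ} (hp : 1 ≤ p) {a b : ℝ} (f : ℝ → ℝ) :
    ∫⁻ x in Ioo a b, ENNReal.ofReal |f x| ∂volume
      ≤ volume (Ioo a b) + ∫⁻ x in Ioo a b, ENNReal.ofReal (|f x| ^ p) ∂volume := by
  have hpt : ∀ x : ℝ, ENNReal.ofReal |f x| ≤ 1 + ENNReal.ofReal (|f x| ^ p) := by
    intro x
    have h1 : ENNReal.ofReal |f x| = (ENNReal.ofReal |f x|) ^ (1:ℝ) := by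
      rw [ENNReal.rpow_one]
    have h2 : ENNReal.ofReal (|f x| ^ p) = (ENNReal.ofReal |f x|) ^ p := by
      rw [ENNReal.ofReal_rpow_of_nonneg (abs_nonneg _) (by linarith)]
    rw [h1, h2]
    exact lem_rpow_le_one_add zero_le_one hp
  calc ∫⁻ x in Ioo a b, ENNReal.ofReal |f x| ∂volume
      ≤ ∫⁻ x in Ioo a b, (1 + ENNReal.ofReal (|f x| ^ p)) ∂volume :=
        lintegral_mono hpt
    _ = volume (Ioo a b) + ∫⁻ x in Ioo a b, ENNReal.ofReal (|f x| ^ p) ∂volume := by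
        rw [lintegral_add_left measurable_const]
        simp [lintegral_const, Measure.restrict_apply]

lemma lem_ls_bound {p s : ℝ} (hs : 0 ≤ s) (hsp : s ≤ p) {a b : ℝ} (f : ℝ → ℝ) :
    ∫⁻ x in Ioo a b, ENNReal.ofReal (|f x| ^ s) ∂volume
      ≤ volume (Ioo a b) + ∫⁻ x in Ioo a b, ENNReal.ofReal (|f x| ^ p) ∂volume := by
  have hpt : ∀ x : ℝ, ENNReal.ofReal (|f x| ^ s) ≤ 1 + ENNReal.ofReal (|f x| ^ p) := by
    intro x
    have h1 : ENNReal.ofReal (|f x| ^ s) = (ENNReal.ofReal |f x|) ^ s := by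
      rw [ENNReal.ofReal_rpow_of_nonneg (abs_nonneg _) hs]
    have h2 : ENNReal.ofReal (|f x| ^ p) = (ENNReal.ofReal |f x|) ^ p := by
      rw [ENNReal.ofReal_rpow_of_nonneg (abs_nonneg _) (le_trans hs hsp)]
    rw [h1, h2]
    exact lem_rpow_le_one_add hs hsp
  calc ∫⁻ x in Ioo a b, ENNReal.ofReal (|f x| ^ s) ∂volume
      ≤ ∫⁻ x in Ioo a b, (1 + ENNReal.ofReal (|f x| ^ p)) ∂volume := lintegral_mono hpt
    _ = volume (Ioo a b) + ∫⁻ x in Ioo a b, ENNReal.ofReal (|f x| ^ p) ∂volume := by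
        rw [lintegral_add_left measurable_const]
        simp [lintegral_const, Measure.restrict_apply]

lemma lem_half {a b α p q : ℝ} (hα0 : 0 < α) (hα1 : α < 1)
    (hp : 1 ≤ p) (hq : 1 ≤ q) (hpq : 1 / p + 1 / q ≤ 1 + α) (himp : q * α ≤ 1 → 1 < p)
    (f g : ℝ → ℝ) (hgm : Measurable g)
    (hX : ∫⁻ x in Ioo a b, ENNReal.ofReal (|f x| ^ p) ∂volume ≠ ⊤)
    (hY : ∫⁻ s in Ioo a b, ENNReal.ofReal (|g s| ^ q) ∂volume ≠ ⊤) :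
    ∫⁻ x in Ioo a b, (ENNReal.ofReal |f x| *
        ∫⁻ d in Ioo (0:ℝ) (|f x| ^ (p / q)),
          (volume {s | s ∈ Ioo a b ∧ d < |g s|}) ^ α ∂volume) ∂volume < ⊤ := by
  have hp0 : (0:ℝ) < p := by linarith
  have hq0 : (0:ℝ) < q := by linarith
  set X := ∫⁻ x in Ioo a b, ENNReal.ofReal (|f x| ^ p) ∂volume with hXdef
  set Y := ∫⁻ s in Ioo a b, ENNReal.ofReal (|g s| ^ q) ∂volume with hYdef
  have hΛ : volume (Ioo a b) ≠ ⊤ := by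
    rw [Real.volume_Ioo]; exact ENNReal.ofReal_ne_top
  by_cases hqα : 1 < q * α
  · set C0 := ENNReal.ofReal (b - a) ^ α + Y ^ α * ENNReal.ofReal (-1 / (-(q * α) + 1))
      with hC0
    have hC0top : C0 ≠ ⊤ := by
      rw [hC0]
      refine ENNReal.add_ne_top.2 ⟨?_, ?_⟩
      · exact (ENNReal.rpow_lt_top_of_nonneg hα0.le ENNReal.ofReal_ne_top).ne
      · exact ENNReal.mul_ne_top (ENNReal.rpow_lt_top_of_nonneg hα0.le hY).ne
          ENNReal.ofReal_ne_top
    have hbd : ∀ x : ℝ,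
        (∫⁻ d in Ioo (0:ℝ) (|f x| ^ (p / q)),
          (volume {s | s ∈ Ioo a b ∧ d < |g s|}) ^ α ∂volume) ≤ C0 := by
      intro x
      refine le_trans (lintegral_mono_set Ioo_subset_Ioi_self) ?_
      exact lem_phi_top hα0 hq0 hqα g hgm
    calc ∫⁻ x in Ioo a b, (ENNReal.ofReal |f x| *
          ∫⁻ d in Ioo (0:ℝ) (|f x| ^ (p / q)),
            (volume {s | s ∈ Ioo a b ∧ d < |g s|}) ^ α ∂volume) ∂volume
        ≤ ∫⁻ x in Ioo a b, ENNReal.ofReal |f x| * C0 ∂volume :=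
          lintegral_mono fun x => mul_le_mul_right (hbd x) _
      _ = (∫⁻ x in Ioo a b, ENNReal.ofReal |f x| ∂volume) * C0 :=
          lintegral_mul_const' _ _ hC0top
      _ < ⊤ := by
          refine ENNReal.mul_lt_top ?_ hC0top.lt_top
          refine lt_of_le_of_lt (lem_l1_bound hp f) ?_
          exact (ENNReal.add_lt_top).2 ⟨hΛ.lt_top, hX.lt_top⟩
  · push_neg at hqα
    have hp1 : 1 < p := himp hqα
    obtain ⟨α', hα'0, hα'α, hqα', hpq'⟩ := lem_exps hp1 hq hα0 hpq
    set e := (p / q) * (1 - q * α') with he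
    have he0 : 0 ≤ e := mul_nonneg (by positivity) (by linarith)
    have hep : 1 + e ≤ p := by
      have h1 : e = p / q - p * α' := by rw [he]; field_simp
      have h2 : p * (1 / p) + p * (1 / q) ≤ p * (1 + α') := by nlinarith
      have h3 : p * (1 / p) = 1 := by field_simp
      have h4 : p * (1 / q) = p / q := by ring
      linarith
    set c1 := ENNReal.ofReal (b - a) ^ (α - α') * Y ^ α' *
      ENNReal.ofReal (1 / (1 - q * α')) with hc1
    have hc1top : c1 ≠ ⊤ := by
      rw [hc1]
      exact ENNReal.mul_ne_top (ENNReal.mul_ne_top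
        (ENNReal.rpow_lt_top_of_nonneg (by linarith) ENNReal.ofReal_ne_top).ne
        (ENNReal.rpow_lt_top_of_nonneg hα'0.le hY).ne) ENNReal.ofReal_ne_top
    have hpt : ∀ x : ℝ, ENNReal.ofReal |f x| *
        (∫⁻ d in Ioo (0:ℝ) (|f x| ^ (p / q)),
          (volume {s | s ∈ Ioo a b ∧ d < |g s|}) ^ α ∂volume)
        ≤ ENNReal.ofReal (|f x| ^ (1 + e)) * c1 := by
      intro x
      have hT : 0 ≤ |f x| ^ (p / q) := Real.rpow_nonneg (abs_nonneg _) _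
      have h1 := lem_phi_lt hα'0 hα'α hq0 hqα' g hgm hT (a := a) (b := b)
      refine le_trans (mul_le_mul_right h1 _) (le_of_eq ?_)
      have h2 : (|f x| ^ (p / q)) ^ (1 - q * α') = |f x| ^ e := by
        rw [← Real.rpow_mul (abs_nonneg _), he]
      have h3 : (|f x| ^ (p / q)) ^ (1 - q * α') / (1 - q * α')
          = |f x| ^ e * (1 / (1 - q * α')) := by
        rw [h2]; ring
      rw [h3, ENNReal.ofReal_mul (Real.rpow_nonneg (abs_nonneg _) _)]
      have h4 : ENNReal.ofReal |f x| * ENNReal.ofReal (|f x| ^ e)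
          = ENNReal.ofReal (|f x| ^ (1 + e)) := by
        rw [← ENNReal.ofReal_mul (abs_nonneg _)]
        congr 1
        rw [Real.rpow_add' (abs_nonneg _) (by positivity), Real.rpow_one]
      calc ENNReal.ofReal |f x| * (ENNReal.ofReal (b - a) ^ (α - α') * Y ^ α' *
            (ENNReal.ofReal (|f x| ^ e) * ENNReal.ofReal (1 / (1 - q * α'))))
          = (ENNReal.ofReal |f x| * ENNReal.ofReal (|f x| ^ e)) *
            (ENNReal.ofReal (b - a) ^ (α - α') * Y ^ α' *
              ENNReal.ofReal (1 / (1 - q * α'))) := by ring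
        _ = ENNReal.ofReal (|f x| ^ (1 + e)) * c1 := by rw [h4, hc1]
    calc ∫⁻ x in Ioo a b, (ENNReal.ofReal |f x| *
          ∫⁻ d in Ioo (0:ℝ) (|f x| ^ (p / q)),
            (volume {s | s ∈ Ioo a b ∧ d < |g s|}) ^ α ∂volume) ∂volume
        ≤ ∫⁻ x in Ioo a b, ENNReal.ofReal (|f x| ^ (1 + e)) * c1 ∂volume :=
          lintegral_mono hpt
      _ = (∫⁻ x in Ioo a b, ENNReal.ofReal (|f x| ^ (1 + e)) ∂volume) * c1 :=
          lintegral_mul_const' _ _ hc1top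
      _ < ⊤ := by
          refine ENNReal.mul_lt_top ?_ hc1top.lt_top
          refine lt_of_le_of_lt (lem_ls_bound (by linarith) hep f) ?_
          exact (ENNReal.add_lt_top).2 ⟨hΛ.lt_top, hX.lt_top⟩

lemma rpow_dominate {u v p q : ℝ} (hu : 0 ≤ u) (hv : 0 ≤ v) (hq : 0 < q)
    (h : u ^ q ≤ v ^ p) : u ≤ v ^ (p / q) := by
  have h1 : (u ^ q) ^ (1 / q) ≤ (v ^ p) ^ (1 / q) :=
    Real.rpow_le_rpow (Real.rpow_nonneg hu q) h (by positivity)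
  rwa [← Real.rpow_mul hu, ← Real.rpow_mul hv, mul_one_div, div_self hq.ne',
    Real.rpow_one, mul_one_div] at h1

lemma lem_mainlint {a b α p q : ℝ} (hα0 : 0 < α) (hα1 : α < 1)
    (hp : 1 ≤ p) (hq : 1 ≤ q) (hpq : 1 / p + 1 / q ≤ 1 + α)
    (himp1 : q * α ≤ 1 → 1 < p) (himp2 : p * α ≤ 1 → 1 < q)
    (f g : ℝ → ℝ) (hfm : Measurable f) (hgm : Measurable g)
    (hX : ∫⁻ x in Ioo a b, ENNReal.ofReal (|f x| ^ p) ∂volume ≠ ⊤)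
    (hY : ∫⁻ s in Ioo a b, ENNReal.ofReal (|g s| ^ q) ∂volume ≠ ⊤) :
    ∫⁻ x in Ioo a b, ∫⁻ s in Ioo a b,
      (ENNReal.ofReal |f x| * ENNReal.ofReal |g s| *
        (if s < x then ENNReal.ofReal ((x - s) ^ (α - 1)) else 0)) ∂volume ∂volume < ⊤ := by
  have hp0 : (0:ℝ) < p := by linarith
  have hq0 : (0:ℝ) < q := by linarith
  set h1 : ℝ → ℝ → ℝ≥0∞ := fun x s =>
    if |g s| ^ q ≤ |f x| ^ p ∧ s < x then
      ENNReal.ofReal |f x| * ENNReal.ofReal |g s| * ENNReal.ofReal ((x - s) ^ (α - 1))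
    else 0 with hh1
  set h2 : ℝ → ℝ → ℝ≥0∞ := fun x s =>
    if |f x| ^ p < |g s| ^ q ∧ s < x then
      ENNReal.ofReal |f x| * ENNReal.ofReal |g s| * ENNReal.ofReal ((x - s) ^ (α - 1))
    else 0 with hh2
  have hmeas1 : Measurable (Function.uncurry h1) := by
    have ha : Measurable fun z : ℝ × ℝ => |g z.2| ^ q := by fun_prop
    have hb : Measurable fun z : ℝ × ℝ => |f z.1| ^ p := by fun_prop
    exact Measurable.ite ((measurableSet_le ha hb).inter
      (measurableSet_lt measurable_snd measurable_fst)) (by fun_prop) measurable_const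
  have hmeas2 : Measurable (Function.uncurry h2) := by
    have ha : Measurable fun z : ℝ × ℝ => |g z.2| ^ q := by fun_prop
    have hb : Measurable fun z : ℝ × ℝ => |f z.1| ^ p := by fun_prop
    exact Measurable.ite ((measurableSet_lt hb ha).inter
      (measurableSet_lt measurable_snd measurable_fst)) (by fun_prop) measurable_const
  have hsplit : ∀ x s : ℝ, ENNReal.ofReal |f x| * ENNReal.ofReal |g s| *
      (if s < x then ENNReal.ofReal ((x - s) ^ (α - 1)) else 0) = h1 x s + h2 x s := by
    intro x s
    by_cases hsx : s < x
    · rcases le_or_gt (|g s| ^ q) (|f x| ^ p) with hc | hc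
      · rw [hh1, hh2]
        simp only [if_pos (And.intro hc hsx), if_pos hsx,
          if_neg (fun hcon : _ ∧ _ => absurd hcon.1 (not_lt.2 hc)), add_zero]
      · rw [hh1, hh2]
        simp only [if_pos (And.intro hc hsx), if_pos hsx,
          if_neg (fun hcon : _ ∧ _ => absurd hcon.1 (not_le.2 hc)), zero_add]
    · simp [hh1, hh2, hsx]
  have hrw : ∫⁻ x in Ioo a b, ∫⁻ s in Ioo a b,
      (ENNReal.ofReal |f x| * ENNReal.ofReal |g s| *
        (if s < x then ENNReal.ofReal ((x - s) ^ (α - 1)) else 0)) ∂volume ∂volume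
      = (∫⁻ x in Ioo a b, ∫⁻ s in Ioo a b, h1 x s ∂volume ∂volume)
        + ∫⁻ x in Ioo a b, ∫⁻ s in Ioo a b, h2 x s ∂volume ∂volume := by
    rw [← lintegral_add_left (Measurable.lintegral_prod_right
      (show Measurable (Function.uncurry h1) from hmeas1))]
    refine lintegral_congr fun x => ?_
    rw [← lintegral_add_left
      (show Measurable fun s => h1 x s from hmeas1.comp measurable_prodMk_left)]
    exact lintegral_congr fun s => hsplit x s
  rw [hrw]
  refine ENNReal.add_lt_top.2 ⟨?_, ?_⟩
  · -- region |g s|^q ≤ |f x|^p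
    have hinner : ∀ x : ℝ, ∫⁻ s in Ioo a b, h1 x s ∂volume
        ≤ ENNReal.ofReal α⁻¹ * (ENNReal.ofReal |f x| *
          ∫⁻ d in Ioo (0:ℝ) (|f x| ^ (p / q)),
            (volume {s | s ∈ Ioo a b ∧ d < |g s|}) ^ α ∂volume) := by
      intro x
      have hpull : ∀ s : ℝ, h1 x s = ENNReal.ofReal |f x| *
          (if |g s| ^ q ≤ |f x| ^ p ∧ s < x then
            ENNReal.ofReal |g s| * ENNReal.ofReal ((x - s) ^ (α - 1)) else 0) := by
        intro s
        by_cases hc : |g s| ^ q ≤ |f x| ^ p ∧ s < x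
        · rw [hh1]; simp only [if_pos hc]; ring
        · rw [hh1]; simp only [if_neg hc, mul_zero]
      calc ∫⁻ s in Ioo a b, h1 x s ∂volume
          = ENNReal.ofReal |f x| * ∫⁻ s in Ioo a b,
              (if |g s| ^ q ≤ |f x| ^ p ∧ s < x then
                ENNReal.ofReal |g s| * ENNReal.ofReal ((x - s) ^ (α - 1)) else 0) ∂volume := by
            simp_rw [hpull]
            exact lintegral_const_mul' _ _ ENNReal.ofReal_ne_top
        _ ≤ ENNReal.ofReal |f x| * ∫⁻ s in Ioo a b,
              (if |g s| ≤ |f x| ^ (p / q) ∧ s < x then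
                ENNReal.ofReal |g s| * ENNReal.ofReal ((x - s) ^ (α - 1)) else 0) ∂volume := by
            refine mul_le_mul_right (lintegral_mono fun s => ?_) _
            by_cases hc : |g s| ^ q ≤ |f x| ^ p ∧ s < x
            · rw [if_pos hc,
                if_pos (And.intro (rpow_dominate (abs_nonneg _) (abs_nonneg _) hq0 hc.1) hc.2)]
            · rw [if_neg hc]; exact zero_le
        _ ≤ ENNReal.ofReal |f x| * (ENNReal.ofReal α⁻¹ *
              ∫⁻ d in Ioo (0:ℝ) (|f x| ^ (p / q)),
                (volume {s | s ∈ Ioo a b ∧ d < |g s|}) ^ α ∂volume) :=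
            mul_le_mul_right (lem_innerL hα0 hα1 g hgm x (|f x| ^ (p / q))) _
        _ = ENNReal.ofReal α⁻¹ * (ENNReal.ofReal |f x| *
              ∫⁻ d in Ioo (0:ℝ) (|f x| ^ (p / q)),
                (volume {s | s ∈ Ioo a b ∧ d < |g s|}) ^ α ∂volume) := by ring
    calc ∫⁻ x in Ioo a b, ∫⁻ s in Ioo a b, h1 x s ∂volume ∂volume
        ≤ ∫⁻ x in Ioo a b, ENNReal.ofReal α⁻¹ * (ENNReal.ofReal |f x| *
            ∫⁻ d in Ioo (0:ℝ) (|f x| ^ (p / q)),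
              (volume {s | s ∈ Ioo a b ∧ d < |g s|}) ^ α ∂volume) ∂volume :=
          lintegral_mono hinner
      _ = ENNReal.ofReal α⁻¹ * ∫⁻ x in Ioo a b, (ENNReal.ofReal |f x| *
            ∫⁻ d in Ioo (0:ℝ) (|f x| ^ (p / q)),
              (volume {s | s ∈ Ioo a b ∧ d < |g s|}) ^ α ∂volume) ∂volume :=
          lintegral_const_mul' _ _ ENNReal.ofReal_ne_top
      _ < ⊤ := ENNReal.mul_lt_top ENNReal.ofReal_lt_top
          (lem_half hα0 hα1 hp hq hpq himp1 f g hgm hX hY)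
  · -- region |f x|^p < |g s|^q
    rw [lintegral_lintegral_swap hmeas2.aemeasurable]
    have hinner : ∀ s : ℝ, ∫⁻ x in Ioo a b, h2 x s ∂volume
        ≤ ENNReal.ofReal α⁻¹ * (ENNReal.ofReal |g s| *
          ∫⁻ c in Ioo (0:ℝ) (|g s| ^ (q / p)),
            (volume {x | x ∈ Ioo a b ∧ c < |f x|}) ^ α ∂volume) := by
      intro s
      have hpull : ∀ x : ℝ, h2 x s = ENNReal.ofReal |g s| *
          (if |f x| ^ p < |g s| ^ q ∧ s < x then
            ENNReal.ofReal |f x| * ENNReal.ofReal ((x - s) ^ (α - 1)) else 0) := by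
        intro x
        by_cases hc : |f x| ^ p < |g s| ^ q ∧ s < x
        · rw [hh2]; simp only [if_pos hc]; ring
        · rw [hh2]; simp only [if_neg hc, mul_zero]
      calc ∫⁻ x in Ioo a b, h2 x s ∂volume
          = ENNReal.ofReal |g s| * ∫⁻ x in Ioo a b,
              (if |f x| ^ p < |g s| ^ q ∧ s < x then
                ENNReal.ofReal |f x| * ENNReal.ofReal ((x - s) ^ (α - 1)) else 0) ∂volume := by
            simp_rw [hpull]
            exact lintegral_const_mul' _ _ ENNReal.ofReal_ne_top
        _ ≤ ENNReal.ofReal |g s| * ∫⁻ x in Ioo a b,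
              (if |f x| ≤ |g s| ^ (q / p) ∧ s < x then
                ENNReal.ofReal |f x| * ENNReal.ofReal ((x - s) ^ (α - 1)) else 0) ∂volume := by
            refine mul_le_mul_right (lintegral_mono fun x => ?_) _
            by_cases hc : |f x| ^ p < |g s| ^ q ∧ s < x
            · rw [if_pos hc,
                if_pos (And.intro (rpow_dominate (abs_nonneg _) (abs_nonneg _) hp0 hc.1.le) hc.2)]
            · rw [if_neg hc]; exact zero_le
        _ ≤ ENNReal.ofReal |g s| * (ENNReal.ofReal α⁻¹ *
              ∫⁻ c in Ioo (0:ℝ) (|g s| ^ (q / p)),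
                (volume {x | x ∈ Ioo a b ∧ c < |f x|}) ^ α ∂volume) :=
            mul_le_mul_right (lem_innerR hα0 hα1 f hfm s (|g s| ^ (q / p))) _
        _ = ENNReal.ofReal α⁻¹ * (ENNReal.ofReal |g s| *
              ∫⁻ c in Ioo (0:ℝ) (|g s| ^ (q / p)),
                (volume {x | x ∈ Ioo a b ∧ c < |f x|}) ^ α ∂volume) := by ring
    calc ∫⁻ s in Ioo a b, ∫⁻ x in Ioo a b, h2 x s ∂volume ∂volume
        ≤ ∫⁻ s in Ioo a b, ENNReal.ofReal α⁻¹ * (ENNReal.ofReal |g s| *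
            ∫⁻ c in Ioo (0:ℝ) (|g s| ^ (q / p)),
              (volume {x | x ∈ Ioo a b ∧ c < |f x|}) ^ α ∂volume) ∂volume :=
          lintegral_mono hinner
      _ = ENNReal.ofReal α⁻¹ * ∫⁻ s in Ioo a b, (ENNReal.ofReal |g s| *
            ∫⁻ c in Ioo (0:ℝ) (|g s| ^ (q / p)),
              (volume {x | x ∈ Ioo a b ∧ c < |f x|}) ^ α ∂volume) ∂volume :=
          lintegral_const_mul' _ _ ENNReal.ofReal_ne_top
      _ < ⊤ := ENNReal.mul_lt_top ENNReal.ofReal_lt_top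
          (lem_half hα0 hα1 hq hp (by linarith) himp2 g f hfm hY hX)

lemma lem_easy {a b α p q : ℝ} (h1α : 1 ≤ α) (hp : 1 ≤ p) (hq : 1 ≤ q)
    (f g : ℝ → ℝ) (hfm : Measurable f) (hgm : Measurable g)
    (hX : ∫⁻ x in Ioo a b, ENNReal.ofReal (|f x| ^ p) ∂volume ≠ ⊤)
    (hY : ∫⁻ s in Ioo a b, ENNReal.ofReal (|g s| ^ q) ∂volume ≠ ⊤) :
    ∫⁻ x in Ioo a b, ∫⁻ s in Ioo a b,
      (ENNReal.ofReal |f x| * ENNReal.ofReal |g s| *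
        (if s < x then ENNReal.ofReal ((x - s) ^ (α - 1)) else 0)) ∂volume ∂volume < ⊤ := by
  set c := ENNReal.ofReal ((b - a) ^ (α - 1)) with hc
  have hΛ : volume (Ioo a b) ≠ ⊤ := by rw [Real.volume_Ioo]; exact ENNReal.ofReal_ne_top
  have hG : ∫⁻ s in Ioo a b, ENNReal.ofReal |g s| ∂volume ≠ ⊤ := by
    refine (lt_of_le_of_lt (lem_l1_bound hq g) ?_).ne
    exact ENNReal.add_lt_top.2 ⟨hΛ.lt_top, hY.lt_top⟩
  have hF : ∫⁻ x in Ioo a b, ENNReal.ofReal |f x| ∂volume ≠ ⊤ := by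
    refine (lt_of_le_of_lt (lem_l1_bound hp f) ?_).ne
    exact ENNReal.add_lt_top.2 ⟨hΛ.lt_top, hX.lt_top⟩
  set D := (∫⁻ s in Ioo a b, ENNReal.ofReal |g s| ∂volume) * c with hD
  have hDtop : D ≠ ⊤ := ENNReal.mul_ne_top hG ENNReal.ofReal_ne_top
  have hbd : ∀ x ∈ Ioo a b, ∫⁻ s in Ioo a b,
      (ENNReal.ofReal |f x| * ENNReal.ofReal |g s| *
        (if s < x then ENNReal.ofReal ((x - s) ^ (α - 1)) else 0)) ∂volume
      ≤ ENNReal.ofReal |f x| * D := by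
    intro x hx
    calc ∫⁻ s in Ioo a b, (ENNReal.ofReal |f x| * ENNReal.ofReal |g s| *
          (if s < x then ENNReal.ofReal ((x - s) ^ (α - 1)) else 0)) ∂volume
        ≤ ∫⁻ s in Ioo a b, ENNReal.ofReal |f x| * (ENNReal.ofReal |g s| * c) ∂volume := by
          refine setLIntegral_mono (by fun_prop) fun s hs => ?_
          by_cases hsx : s < x
          · rw [if_pos hsx, mul_assoc]
            refine mul_le_mul_right (mul_le_mul_right ?_ _) _
            exact ENNReal.ofReal_le_ofReal
              (Real.rpow_le_rpow (by linarith [hsx]) (by linarith [hs.1, hx.2]) (by linarith))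
          · rw [if_neg hsx, mul_zero]; exact zero_le
      _ = ENNReal.ofReal |f x| * ∫⁻ s in Ioo a b, ENNReal.ofReal |g s| * c ∂volume :=
          lintegral_const_mul' _ _ ENNReal.ofReal_ne_top
      _ = ENNReal.ofReal |f x| * D := by
          rw [hD, lintegral_mul_const' _ _ ENNReal.ofReal_ne_top]
  calc ∫⁻ x in Ioo a b, ∫⁻ s in Ioo a b,
      (ENNReal.ofReal |f x| * ENNReal.ofReal |g s| *
        (if s < x then ENNReal.ofReal ((x - s) ^ (α - 1)) else 0)) ∂volume ∂volume
      ≤ ∫⁻ x in Ioo a b, ENNReal.ofReal |f x| * D ∂volume :=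
        setLIntegral_mono (by fun_prop) hbd
    _ = (∫⁻ x in Ioo a b, ENNReal.ofReal |f x| ∂volume) * D :=
        lintegral_mul_const' _ _ hDtop
    _ < ⊤ := ENNReal.mul_lt_top hF.lt_top hDtop.lt_top

lemma lem_integrable {a b α p q : ℝ} (hα0 : 0 < α)
    (hp : 1 ≤ p) (hq : 1 ≤ q) (hpq : 1 / p + 1 / q ≤ 1 + α)
    (hpq' : 1 / p + 1 / q = 1 + α → p ≠ 1 ∧ q ≠ 1)
    (f g : ℝ → ℝ) (hfm : Measurable f) (hgm : Measurable g)
    (hX : ∫⁻ x in Ioo a b, ENNReal.ofReal (|f x| ^ p) ∂volume ≠ ⊤)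
    (hY : ∫⁻ s in Ioo a b, ENNReal.ofReal (|g s| ^ q) ∂volume ≠ ⊤) :
    Integrable (fun z : ℝ × ℝ => if z.2 < z.1 then f z.1 * g z.2 * (z.1 - z.2) ^ (α - 1) else 0)
      ((volume.restrict (Ioo a b)).prod (volume.restrict (Ioo a b))) := by
  have hp0 : (0:ℝ) < p := by linarith
  have hq0 : (0:ℝ) < q := by linarith
  have hHm : Measurable (fun z : ℝ × ℝ =>
      if z.2 < z.1 then f z.1 * g z.2 * (z.1 - z.2) ^ (α - 1) else 0) :=
    Measurable.ite (measurableSet_lt measurable_snd measurable_fst) (by fun_prop)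
      measurable_const
  refine ⟨hHm.aestronglyMeasurable, ?_⟩
  rw [hasFiniteIntegral_iff_norm]
  have hptw : ∀ z : ℝ × ℝ, ENNReal.ofReal
      ‖if z.2 < z.1 then f z.1 * g z.2 * (z.1 - z.2) ^ (α - 1) else 0‖
      = ENNReal.ofReal |f z.1| * ENNReal.ofReal |g z.2| *
        (if z.2 < z.1 then ENNReal.ofReal ((z.1 - z.2) ^ (α - 1)) else 0) := by
    intro z
    by_cases hsx : z.2 < z.1
    · rw [if_pos hsx, if_pos hsx, Real.norm_eq_abs, abs_mul, abs_mul,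
        abs_of_nonneg (Real.rpow_nonneg (by linarith) _),
        ENNReal.ofReal_mul (by positivity), ENNReal.ofReal_mul (abs_nonneg _)]
    · rw [if_neg hsx, if_neg hsx, mul_zero, norm_zero, ENNReal.ofReal_zero]
  calc ∫⁻ z, ENNReal.ofReal
        ‖if z.2 < z.1 then f z.1 * g z.2 * (z.1 - z.2) ^ (α - 1) else 0‖
        ∂((volume.restrict (Ioo a b)).prod (volume.restrict (Ioo a b)))
      = ∫⁻ x in Ioo a b, ∫⁻ s in Ioo a b,
          (ENNReal.ofReal |f x| * ENNReal.ofReal |g s| *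
            (if s < x then ENNReal.ofReal ((x - s) ^ (α - 1)) else 0)) ∂volume ∂volume := by
        rw [lintegral_prod _ (by exact (hHm.norm.ennreal_ofReal).aemeasurable)]
        exact lintegral_congr fun x => lintegral_congr fun s => hptw (x, s)
    _ < ⊤ := by
        rcases lt_or_ge α 1 with hα1 | hα1
        · have himp1 : q * α ≤ 1 → 1 < p := by
            intro hqa
            by_contra hnp
            push_neg at hnp
            have hp1 : p = 1 := le_antisymm hnp hp
            have h1 : 1 / q ≤ α := by
              rw [hp1] at hpq; norm_num at hpq; rw [one_div]; linarith
            have hqq : q * (1 / q) = 1 := by field_simp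
            have h2 : 1 ≤ q * α := by nlinarith
            have h3 : q * α = 1 := le_antisymm hqa h2
            have h4 : α = 1 / q := by
              field_simp at h3 ⊢; linarith
            exact (hpq' (by rw [hp1, h4]; ring)).1 hp1
          have himp2 : p * α ≤ 1 → 1 < q := by
            intro hpa
            by_contra hnq
            push_neg at hnq
            have hq1 : q = 1 := le_antisymm hnq hq
            have h1 : 1 / p ≤ α := by
              rw [hq1] at hpq; norm_num at hpq; rw [one_div]; linarith
            have hpp : p * (1 / p) = 1 := by field_simp
            have h2 : 1 ≤ p * α := by nlinarith
            have h3 : p * α = 1 := le_antisymm hpa h2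
            have h4 : α = 1 / p := by
              field_simp at h3 ⊢; linarith
            exact (hpq' (by rw [hq1, h4]; ring)).2 hq1
          exact lem_mainlint hα0 hα1 hp hq hpq himp1 himp2 f g hfm hgm hX hY
        · exact lem_easy hα1 hp hq f g hfm hgm hX hY

lemma memlp_lint_ne_top {p : ℝ} (hp : 1 ≤ p) {a b : ℝ} {f : ℝ → ℝ}
    (hf : MemLp f (ENNReal.ofReal p) (volume.restrict (Ioo a b))) :
    ∫⁻ x in Ioo a b, ENNReal.ofReal (|f x| ^ p) ∂volume ≠ ⊤ := by
  have hp0 : (0:ℝ) < p := by linarith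
  have h1 := hf.eLpNorm_lt_top
  rw [eLpNorm_eq_lintegral_rpow_enorm_toReal (by simp [ENNReal.ofReal_eq_zero]; linarith)
    ENNReal.ofReal_ne_top, ENNReal.toReal_ofReal hp0.le] at h1
  have h2 := (ENNReal.rpow_lt_top_iff_of_pos (y := 1 / p) (by positivity)).1 h1
  have h3 : ∀ x : ℝ, ‖f x‖ₑ ^ p = ENNReal.ofReal (|f x| ^ p) := by
    intro x
    rw [Real.enorm_eq_ofReal_abs, ENNReal.ofReal_rpow_of_nonneg (abs_nonneg _) hp0.le]
  rw [show (fun x => ‖f x‖ₑ ^ p) = fun x => ENNReal.ofReal (|f x| ^ p) from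
    funext h3] at h2
  exact h2.ne

end RLIBP

open RLIBP in
/-- Integration by parts for the standard (unweighted, `w ≡ 1`) Riemann–Liouville
fractional integrals of order `α > 0`. -/
theorem rl_integration_by_parts
    (a b α p q : ℝ) (hab : a < b) (hα : 0 < α)
    (hp : 1 ≤ p) (hq : 1 ≤ q) (hpq : 1 / p + 1 / q ≤ 1 + α)
    (hpq' : 1 / p + 1 / q = 1 + α → p ≠ 1 ∧ q ≠ 1)
    (f g : ℝ → ℝ)
    (hf : MemLp f (ENNReal.ofReal p) (volume.restrict (Ioo a b)))
    (hg : MemLp g (ENNReal.ofReal q) (volume.restrict (Ioo a b))) :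
    ∫ x in a..b, f x * rlIL a (fun _ => 1) α g x
      = ∫ x in a..b, g x * rlIR b (fun _ => 1) α f x := by
  set μ := volume.restrict (Ioo a b) with hμdef
  -- measurable representatives
  set f₀ : ℝ → ℝ := hf.1.mk f with hf₀def
  set g₀ : ℝ → ℝ := hg.1.mk g with hg₀def
  have hf₀m : Measurable f₀ := hf.1.stronglyMeasurable_mk.measurable
  have hg₀m : Measurable g₀ := hg.1.stronglyMeasurable_mk.measurable
  have hff₀ : f =ᵐ[μ] f₀ := hf.1.ae_eq_mk
  have hgg₀ : g =ᵐ[μ] g₀ := hg.1.ae_eq_mk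
  have hf₀ : MemLp f₀ (ENNReal.ofReal p) μ := MemLp.ae_eq hff₀ hf
  have hg₀ : MemLp g₀ (ENNReal.ofReal q) μ := MemLp.ae_eq hgg₀ hg
  have hX := memlp_lint_ne_top hp hf₀
  have hY := memlp_lint_ne_top hq hg₀
  -- volume-a.e. versions
  have hffv : ∀ᵐ x ∂(volume : Measure ℝ), x ∈ Ioo a b → f x = f₀ x :=
    (ae_restrict_iff' measurableSet_Ioo).1 hff₀
  have hggv : ∀ᵐ s ∂(volume : Measure ℝ), s ∈ Ioo a b → g s = g₀ s :=
    (ae_restrict_iff' measurableSet_Ioo).1 hgg₀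
  set H : ℝ × ℝ → ℝ :=
    fun z => if z.2 < z.1 then f₀ z.1 * g₀ z.2 * (z.1 - z.2) ^ (α - 1) else 0 with hHdef
  have hInt : Integrable H (μ.prod μ) :=
    lem_integrable hα hp hq hpq hpq' f₀ g₀ hf₀m hg₀m hX hY
  have hswap : ∫ x, (∫ s, H (x, s) ∂μ) ∂μ = ∫ s, (∫ x, H (x, s) ∂μ) ∂μ :=
    integral_integral_swap (f := fun x s => H (x, s)) hInt
  -- LHS
  have hL : ∫ x in a..b, f x * rlIL a (fun _ => 1) α g x
      = (1 / Real.Gamma α) * ∫ x, (∫ s, H (x, s) ∂μ) ∂μ := by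
    rw [intervalIntegral.integral_of_le hab.le, integral_Ioc_eq_integral_Ioo]
    rw [← MeasureTheory.integral_const_mul]
    refine integral_congr_ae ?_
    rw [Filter.EventuallyEq, ae_restrict_iff' measurableSet_Ioo]
    filter_upwards [hffv] with x hfx hx
    have hinner : ∫ s in a..x, (x - s) ^ (α - 1) * (fun _ : ℝ => (1:ℝ)) s * g s
        = ∫ s, (if s < x then g₀ s * (x - s) ^ (α - 1) else 0) ∂μ := by
      have step1 : ∫ s in a..x, (x - s) ^ (α - 1) * (fun _ : ℝ => (1:ℝ)) s * g s
          = ∫ s in a..x, g₀ s * (x - s) ^ (α - 1) := by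
        refine intervalIntegral.integral_congr_ae ?_
        filter_upwards [hggv] with s hgs hs
        rw [uIoc_of_le hx.1.le] at hs
        have hsmem : s ∈ Ioo a b := ⟨hs.1, lt_of_le_of_lt hs.2 hx.2⟩
        rw [hgs hsmem]; ring
      rw [step1, intervalIntegral.integral_of_le hx.1.le, integral_Ioc_eq_integral_Ioo]
      have hsets : Ioo a x = Ioo a b ∩ Iio x := by
        ext s
        simp only [mem_Ioo, mem_inter_iff, mem_Iio]
        exact ⟨fun h => ⟨⟨h.1, lt_trans h.2 hx.2⟩, h.2⟩, fun h => ⟨h.1.1, h.2⟩⟩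
      rw [hsets]
      have hind : ∀ s : ℝ, (if s < x then g₀ s * (x - s) ^ (α - 1) else 0)
          = (Iio x).indicator (fun s => g₀ s * (x - s) ^ (α - 1)) s := by
        intro s; rw [indicator_apply]; rfl
      rw [show (fun s => if s < x then g₀ s * (x - s) ^ (α - 1) else 0)
          = (Iio x).indicator (fun s => g₀ s * (x - s) ^ (α - 1)) from funext hind]
      rw [hμdef, setIntegral_indicator measurableSet_Iio]
    have hpull : ∫ s, H (x, s) ∂μ = f₀ x * ∫ s, (if s < x then
        g₀ s * (x - s) ^ (α - 1) else 0) ∂μ := by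
      rw [← MeasureTheory.integral_const_mul]
      refine integral_congr_ae (Filter.Eventually.of_forall fun s => ?_)
      by_cases hsx : s < x
      · simp only [hHdef, if_pos hsx]; ring
      · simp only [hHdef, if_neg hsx, mul_zero]
    rw [hpull, ← hinner, rlIL, hfx hx]
    simp only [one_div_one]
    ring
  -- RHS
  have hR : ∫ x in a..b, g x * rlIR b (fun _ => 1) α f x
      = (1 / Real.Gamma α) * ∫ s, (∫ x, H (x, s) ∂μ) ∂μ := by
    rw [intervalIntegral.integral_of_le hab.le, integral_Ioc_eq_integral_Ioo]
    rw [← MeasureTheory.integral_const_mul]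
    refine integral_congr_ae ?_
    rw [Filter.EventuallyEq, ae_restrict_iff' measurableSet_Ioo]
    filter_upwards [hggv] with s hgs hs
    have hbne : ∀ᵐ x ∂(volume : Measure ℝ), x ≠ b := by
      rw [ae_iff]; simpa using measure_singleton b
    have hinner : ∫ x in s..b, (x - s) ^ (α - 1) * (fun _ : ℝ => (1:ℝ)) x * f x
        = ∫ x, (if s < x then f₀ x * (x - s) ^ (α - 1) else 0) ∂μ := by
      have step1 : ∫ x in s..b, (x - s) ^ (α - 1) * (fun _ : ℝ => (1:ℝ)) x * f x
          = ∫ x in s..b, f₀ x * (x - s) ^ (α - 1) := by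
        refine intervalIntegral.integral_congr_ae ?_
        filter_upwards [hffv, hbne] with x hfx hxb hx
        rw [uIoc_of_le hs.2.le] at hx
        have hxmem : x ∈ Ioo a b := ⟨lt_trans hs.1 hx.1, lt_of_le_of_ne hx.2 hxb⟩
        rw [hfx hxmem]; ring
      rw [step1, intervalIntegral.integral_of_le hs.2.le, integral_Ioc_eq_integral_Ioo]
      have hsets : Ioo s b = Ioo a b ∩ Ioi s := by
        ext x
        simp only [mem_Ioo, mem_inter_iff, mem_Ioi]
        exact ⟨fun h => ⟨⟨lt_trans hs.1 h.1, h.2⟩, h.1⟩, fun h => ⟨h.2, h.1.2⟩⟩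
      rw [hsets]
      have hind : ∀ x : ℝ, (if s < x then f₀ x * (x - s) ^ (α - 1) else 0)
          = (Ioi s).indicator (fun x => f₀ x * (x - s) ^ (α - 1)) x := by
        intro x; rw [indicator_apply]; rfl
      rw [show (fun x => if s < x then f₀ x * (x - s) ^ (α - 1) else 0)
          = (Ioi s).indicator (fun x => f₀ x * (x - s) ^ (α - 1)) from funext hind]
      rw [hμdef, setIntegral_indicator measurableSet_Ioi]
    have hpull : ∫ x, H (x, s) ∂μ = g₀ s * ∫ x, (if s < x then
        f₀ x * (x - s) ^ (α - 1) else 0) ∂μ := by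
      rw [← MeasureTheory.integral_const_mul]
      refine integral_congr_ae (Filter.Eventually.of_forall fun x => ?_)
      by_cases hsx : s < x
      · simp only [hHdef, if_pos hsx]; ring
      · simp only [hHdef, if_neg hsx, mul_zero]
    rw [hpull, ← hinner, rlIR, hgs hs]
    simp only [one_div_one]
    ring
  rw [hL, hR, hswap]
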